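/- The Arf invariant Arf(q) = Σ_{i=1}^g q(x_i)q(y_i) of a quadratic refinement q of a symplectic form on a 2g-dimensional ℤ/2ℤ-vector space is independent of the choice of symplectic basis (x_i, y_i). -/

import Mathlib

open Finset

private def χ (c : ZMod 2) : ℤ := (-1) ^ c.val

private lemma χ_add : ∀ r s : ZMod 2, χ (r + s) = χ r * χ s := by decide

private lemma χ_zero : χ 0 = 1 := by decide

private lemma χ_inj : ∀ r s : ZMod 2, χ r = χ s → r = s := by decide

private lemma χ_sum {ι : Type*} (s : Finset ι) (t : ι → ZMod 2) :
    χ (∑ i ∈ s, t i) = ∏ i ∈ s, χ (t i) := by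
  classical
  induction s using Finset.induction_on with
  | empty => simp [χ_zero]
  | insert _ _ hi ih =>
    rw [Finset.sum_insert hi, Finset.prod_insert hi, χ_add, ih]

private lemma zmod2_cases : ∀ c : ZMod 2, c = 0 ∨ c = 1 := by decide

section basics

variable {V : Type*} [AddCommGroup V] [Module (ZMod 2) V]
    (ω : V →ₗ[ZMod 2] V →ₗ[ZMod 2] ZMod 2)
    (q : V → ZMod 2) (hq : ∀ a b, q (a + b) = q a + q b + ω a b)

include hq

private lemma q_zero : q 0 = 0 := by
  have := hq 0 0
  simp only [add_zero, map_zero, LinearMap.zero_apply] at this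
  have h0 : q 0 + 0 = q 0 + q 0 := by rw [add_zero]; exact this
  exact (add_left_cancel h0).symm

private lemma q_smul (c : ZMod 2) (v : V) : q (c • v) = c * q v := by
  rcases zmod2_cases c with h | h <;> subst h
  · simpa using q_zero ω q hq
  · simp

private lemma q_sum_ortho {ι : Type*} [DecidableEq ι] (s : Finset ι) (w : ι → V)
    (h : ∀ i ∈ s, ∀ j ∈ s, ω (w i) (w j) = 0) :
    q (∑ i ∈ s, w i) = ∑ i ∈ s, q (w i) := by
  induction s using Finset.induction_on with
  | empty => simpa using q_zero ω q hq
  | @insert a s ha ih =>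
    rw [Finset.sum_insert ha, Finset.sum_insert ha, hq,
      ih (fun i hi j hj => h i (Finset.mem_insert_of_mem hi) j (Finset.mem_insert_of_mem hj))]
    have : ω (w a) (∑ i ∈ s, w i) = 0 := by
      rw [map_sum]
      exact Finset.sum_eq_zero fun i hi =>
        h a (Finset.mem_insert_self a s) i (Finset.mem_insert_of_mem hi)
    rw [this, add_zero]

end basics

private lemma pair_sum : ∀ α β : ZMod 2,
    ∑ p : ZMod 2 × ZMod 2, χ (p.1 * α + p.2 * β + p.1 * p.2) = 2 * χ (α * β) := by decide

/-- The character sum over the whole space, computed via a symplectic basis. -/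
private lemma key (g : ℕ) {V : Type*} [AddCommGroup V] [Module (ZMod 2) V]
    (ω : V →ₗ[ZMod 2] V →ₗ[ZMod 2] ZMod 2)
    (q : V → ZMod 2) (hq : ∀ a b, q (a + b) = q a + q b + ω a b)
    (x y : Fin g → V)
    (hxx : ∀ i j, ω (x i) (x j) = 0) (hyy : ∀ i j, ω (y i) (y j) = 0)
    (hxy : ∀ i j, ω (x i) (y j) = if i = j then 1 else 0) :
    ∑ c : (Fin g ⊕ Fin g → ZMod 2), χ (q (∑ i, c i • Sum.elim x y i))
      = 2 ^ g * χ (∑ i, q (x i) * q (y i)) := by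
  classical
  -- rewrite the summand
  have hval : ∀ c : Fin g ⊕ Fin g → ZMod 2,
      q (∑ i, c i • Sum.elim x y i)
        = ∑ i : Fin g, (c (Sum.inl i) * q (x i) + c (Sum.inr i) * q (y i)
            + c (Sum.inl i) * c (Sum.inr i)) := by
    intro c
    rw [Fintype.sum_sum_type]
    simp only [Sum.elim_inl, Sum.elim_inr]
    set u := ∑ i : Fin g, c (Sum.inl i) • x i with hu
    set t := ∑ i : Fin g, c (Sum.inr i) • y i with ht
    have hqu : q u = ∑ i : Fin g, c (Sum.inl i) * q (x i) := by
      rw [hu, q_sum_ortho ω q hq _ _ ?_]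
      · exact Finset.sum_congr rfl fun i _ => q_smul ω q hq _ _
      · intro i _ j _
        simp [hxx i j]
    have hqt : q t = ∑ i : Fin g, c (Sum.inr i) * q (y i) := by
      rw [ht, q_sum_ortho ω q hq _ _ ?_]
      · exact Finset.sum_congr rfl fun i _ => q_smul ω q hq _ _
      · intro i _ j _
        simp [hyy i j]
    have hωut : ω u t = ∑ i : Fin g, c (Sum.inl i) * c (Sum.inr i) := by
      rw [hu, ht]
      simp only [map_sum, map_smul, LinearMap.sum_apply, LinearMap.smul_apply, smul_eq_mul,
        hxy, mul_ite, mul_one, mul_zero, Finset.mul_sum]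
      exact Finset.sum_congr rfl fun i _ => by simp [mul_comm]
    rw [hq u t, hqu, hqt, hωut, ← Finset.sum_add_distrib, ← Finset.sum_add_distrib]
  calc ∑ c : (Fin g ⊕ Fin g → ZMod 2), χ (q (∑ i, c i • Sum.elim x y i))
      = ∑ c : (Fin g ⊕ Fin g → ZMod 2), ∏ i : Fin g,
          χ (c (Sum.inl i) * q (x i) + c (Sum.inr i) * q (y i)
              + c (Sum.inl i) * c (Sum.inr i)) := by
        refine Finset.sum_congr rfl fun c _ => ?_
        rw [hval c, χ_sum]
    _ = ∑ p : Fin g → ZMod 2 × ZMod 2, ∏ i : Fin g,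
          χ ((p i).1 * q (x i) + (p i).2 * q (y i) + (p i).1 * (p i).2) := by
        refine (Fintype.sum_bijective
          (fun p : Fin g → ZMod 2 × ZMod 2 => Sum.elim (fun i => (p i).1) (fun i => (p i).2))
          ?_ _ _ ?_).symm
        · constructor
          · intro p p' h
            funext i
            have h1 := congrFun h (Sum.inl i)
            have h2 := congrFun h (Sum.inr i)
            simp only [Sum.elim_inl, Sum.elim_inr] at h1 h2
            exact Prod.ext h1 h2
          · intro c
            exact ⟨fun i => (c (Sum.inl i), c (Sum.inr i)), by funext i; cases i <;> rfl⟩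
        · intro p
          simp
    _ = ∏ i : Fin g, ∑ p : ZMod 2 × ZMod 2,
          χ (p.1 * q (x i) + p.2 * q (y i) + p.1 * p.2) := by
        rw [Fintype.prod_sum (fun i (p : ZMod 2 × ZMod 2) =>
          χ (p.1 * q (x i) + p.2 * q (y i) + p.1 * p.2))]
    _ = ∏ i : Fin g, 2 * χ (q (x i) * q (y i)) := by
        exact Finset.prod_congr rfl fun i _ => pair_sum _ _
    _ = 2 ^ g * χ (∑ i, q (x i) * q (y i)) := by
        rw [Finset.prod_mul_distrib, Finset.prod_const, χ_sum]
        simp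

theorem stmt_18 (g : ℕ) {V : Type*} [AddCommGroup V] [Module (ZMod 2) V]
    (ω : V →ₗ[ZMod 2] V →ₗ[ZMod 2] ZMod 2)
    (q : V → ZMod 2) (hq : ∀ a b, q (a + b) = q a + q b + ω a b)
    (x y x' y' : Fin g → V)
    (b b' : Module.Basis (Fin g ⊕ Fin g) (ZMod 2) V)
    (hb : ∀ i, b (Sum.inl i) = x i ∧ b (Sum.inr i) = y i)
    (hb' : ∀ i, b' (Sum.inl i) = x' i ∧ b' (Sum.inr i) = y' i)
    (hxx : ∀ i j, ω (x i) (x j) = 0) (hyy : ∀ i j, ω (y i) (y j) = 0)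
    (hxy : ∀ i j, ω (x i) (y j) = if i = j then 1 else 0)
    (hxx' : ∀ i j, ω (x' i) (x' j) = 0) (hyy' : ∀ i j, ω (y' i) (y' j) = 0)
    (hxy' : ∀ i j, ω (x' i) (y' j) = if i = j then 1 else 0) :
    ∑ i, q (x i) * q (y i) = ∑ i, q (x' i) * q (y' i) := by
  classical
  have hbe : ∀ i : Fin g ⊕ Fin g, Sum.elim x y i = b i := by
    intro i; cases i with
    | inl i => exact ((hb i).1).symm
    | inr i => exact ((hb i).2).symm
  have hbe' : ∀ i : Fin g ⊕ Fin g, Sum.elim x' y' i = b' i := by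
    intro i; cases i with
    | inl i => exact ((hb' i).1).symm
    | inr i => exact ((hb' i).2).symm
  have h1 : ∑ c : (Fin g ⊕ Fin g → ZMod 2), χ (q (b.equivFun.symm c))
      = 2 ^ g * χ (∑ i, q (x i) * q (y i)) := by
    rw [← key g ω q hq x y hxx hyy hxy]
    refine Finset.sum_congr rfl fun c _ => ?_
    rw [Module.Basis.equivFun_symm_apply]
    congr 1
    exact congrArg q (Finset.sum_congr rfl fun i _ => by rw [hbe i])
  have h2 : ∑ c : (Fin g ⊕ Fin g → ZMod 2), χ (q (b'.equivFun.symm c))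
      = 2 ^ g * χ (∑ i, q (x' i) * q (y' i)) := by
    rw [← key g ω q hq x' y' hxx' hyy' hxy']
    refine Finset.sum_congr rfl fun c _ => ?_
    rw [Module.Basis.equivFun_symm_apply]
    congr 1
    exact congrArg q (Finset.sum_congr rfl fun i _ => by rw [hbe' i])
  have h3 : ∑ c : (Fin g ⊕ Fin g → ZMod 2), χ (q (b.equivFun.symm c))
      = ∑ c : (Fin g ⊕ Fin g → ZMod 2), χ (q (b'.equivFun.symm c)) := by
    apply Fintype.sum_equiv (b.equivFun.symm.trans b'.equivFun).toEquiv
    intro c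
    have he : (b.equivFun.symm.trans b'.equivFun).toEquiv c
        = b'.equivFun (b.equivFun.symm c) := rfl
    rw [he, LinearEquiv.symm_apply_apply]
  have h4 : (2 : ℤ) ^ g * χ (∑ i, q (x i) * q (y i))
      = 2 ^ g * χ (∑ i, q (x' i) * q (y' i)) := by rw [← h1, ← h2, h3]
  have h5 := mul_left_cancel₀ (a := (2:ℤ)^g) (by positivity) h4
  exact χ_inj _ _ h5
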